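/- Let e₁,…,e_{2n} be the standard basis of ℂ^{2n} with n ≥ 4, let w = e₁∧e₄ + e₂∧e₃ + e₅∧e₈ + e₆∧e₇ + Σ_{j=5}^{n} e_{2j−1}∧e_{2j} and v = a₁(e₁∧e₄ + e₂∧e₃) + a₂(e₅∧e₈ + e₆∧e₇) + e₂∧e₄ + e₆∧e₈ + Σ_{j=5}^{n} b_j · e_{2j−1}∧e_{2j} for arbitrary scalars a₁, a₂, b₅,…,b_n. Let φ = ⋀_{j ∉ {2,4,6,8}} e_j ∈ ⋀^{2n−4}ℂ^{2n} (wedge of the remaining basis vectors in increasing order). Then φ ∧ w = 0 but φ ∧ v ∧ v ≠ 0. In particular w does not divide v ∧ v. -/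

import Mathlib

set_option synthInstance.maxHeartbeats 1000000
set_option maxHeartbeats 1000000

open ExteriorAlgebra

/-- The image in the exterior algebra of the `i`-th standard basis vector of `ℂⁿ`
(indices `0 ≤ i < n`; so `e₁` of the paper is `stdExt n 0`, etc.). -/
noncomputable def stdExt (n : ℕ) (i : ℕ) : ExteriorAlgebra ℂ (Fin n → ℂ) :=
  ι ℂ (fun t : Fin n => if (t : ℕ) = i then (1 : ℂ) else 0)

namespace PartitionAux

/-- Wedge of a list of standard basis vectors. -/
noncomputable def WL (m : ℕ) (l : List ℕ) : ExteriorAlgebra ℂ (Fin m → ℂ) :=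
  (l.map (stdExt m)).prod

lemma sq_zero (m i : ℕ) : stdExt m i * stdExt m i = 0 := ι_sq_zero _

lemma anti (m i j : ℕ) : stdExt m i * stdExt m j = -(stdExt m j * stdExt m i) :=
  eq_neg_of_add_eq_zero_left (ι_add_mul_swap _ _)

lemma WL_cons (m a : ℕ) (l : List ℕ) : WL m (a :: l) = stdExt m a * WL m l := by
  simp [WL]

lemma WL_append (m : ℕ) (l₁ l₂ : List ℕ) : WL m (l₁ ++ l₂) = WL m l₁ * WL m l₂ := by
  simp [WL]

lemma WL_single (m a : ℕ) : WL m [a] = stdExt m a := by simp [WL]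

lemma WL_pair (m a b : ℕ) : WL m [a, b] = stdExt m a * stdExt m b := by simp [WL]

lemma swap (m : ℕ) (l : List ℕ) (i : ℕ) :
    WL m l * stdExt m i = (-1 : ℂ) ^ l.length • (stdExt m i * WL m l) := by
  induction l with
  | nil => simp [WL]
  | cons a t ih =>
    rw [WL_cons, mul_assoc, ih, mul_smul_comm, ← mul_assoc, anti m a i, neg_mul, smul_neg,
      mul_assoc, List.length_cons, pow_succ, mul_neg_one, neg_smul]

lemma mem_zero (m : ℕ) (l : List ℕ) (i : ℕ) (h : i ∈ l) : WL m l * stdExt m i = 0 := by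
  induction l with
  | nil => cases h
  | cons a t ih =>
    rw [WL_cons, mul_assoc]
    rcases List.mem_cons.mp h with h | h
    · subst h
      rw [swap, mul_smul_comm, ← mul_assoc, sq_zero, zero_mul, smul_zero]
    · rw [ih h, mul_zero]

lemma kill2 (m : ℕ) (l : List ℕ) (a b : ℕ) (h : a ∈ l ∨ b ∈ l) :
    WL m l * (stdExt m a * stdExt m b) = 0 := by
  rcases h with h | h
  · rw [← mul_assoc, mem_zero m l a h, zero_mul]
  · rw [← mul_assoc, ← WL_single m a, ← WL_append,
      mem_zero m (l ++ [a]) b (List.mem_append_left _ h)]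

lemma even_comm (m i j k : ℕ) :
    stdExt m i * stdExt m j * stdExt m k = stdExt m k * (stdExt m i * stdExt m j) := by
  have h := swap m [i, j] k
  simpa [WL, mul_assoc, neg_one_sq] using h

lemma pair_comm (m i j k l : ℕ) :
    (stdExt m i * stdExt m j) * (stdExt m k * stdExt m l)
      = (stdExt m k * stdExt m l) * (stdExt m i * stdExt m j) := by
  rw [← mul_assoc, even_comm m i j k, mul_assoc, even_comm m i j l, ← mul_assoc]

lemma WL_ne_zero (M : List ℕ) (hnd : M.Nodup) (hmem : ∀ x ∈ M, x < M.length) :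
    WL M.length M ≠ 0 := by
  set m := M.length with hm
  have hinj : Function.Injective M.get := List.nodup_iff_injective_get.mp hnd
  let g : Fin m → Fin m := fun k => ⟨M.get k, hmem _ (List.get_mem M k)⟩
  have hg : Function.Injective g := by
    intro a b hab
    exact hinj (congrArg Fin.val hab)
  let σ : Equiv.Perm (Fin m) := Equiv.ofBijective g (Finite.injective_iff_bijective.mp hg)
  let B := Pi.basisFun ℂ (Fin m)
  let vfun : Fin m → (Fin m → ℂ) := fun k => fun t => if (t : ℕ) = M.get k then 1 else 0
  have hvf : vfun = ⇑B ∘ σ := by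
    funext k t
    have hiff : ((t : ℕ) = M.get k) ↔ (t = g k) :=
      ⟨fun h => Fin.ext h, fun h => congrArg Fin.val h⟩
    show (if (t : ℕ) = M.get k then (1:ℂ) else 0) = Pi.basisFun ℂ (Fin m) (g k) t
    rw [Pi.basisFun_apply, Pi.single_apply, if_congr hiff rfl rfl]
  let detA : (Fin m → ℂ) [⋀^Fin m]→ₗ[ℂ] ℂ := B.det
  let f : ∀ i, (Fin m → ℂ) [⋀^Fin i]→ₗ[ℂ] ℂ := fun i =>
    if h : i = m then cast (by rw [h]) detA else 0
  have hfm : f m = detA := by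
    show (if h : m = m then cast (by rw [h]) detA else 0) = detA
    rw [dif_pos rfl]
    exact eq_of_heq (cast_heq _ _)
  intro h0
  have key : liftAlternating f (WL m M) = detA vfun := by
    have h1 : WL m M = ιMulti ℂ m vfun := by
      rw [ιMulti_apply]
      unfold WL
      conv_lhs => rw [← List.ofFn_get M]
      rw [List.map_ofFn]
      rfl
    rw [h1, liftAlternating_apply_ιMulti, hfm]
  rw [h0, map_zero] at key
  have hne : detA vfun ≠ 0 := by
    rw [hvf]
    have hp : detA (⇑B ∘ σ) = Equiv.Perm.sign σ • detA ⇑B := AlternatingMap.map_perm _ _ _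
    rw [hp, show detA = B.det from rfl, Module.Basis.det_self]
    rcases Int.units_eq_one_or (Equiv.Perm.sign σ) with h | h <;> rw [h] <;>
      simp [Units.smul_def]
  exact hne key.symm

lemma filter_len (k : ℕ) :
    (((List.range (8 + k)).filter
      (fun j => decide (j ∉ ([1, 3, 5, 7] : List ℕ)))).length) = 4 + k := by
  induction k with
  | zero => decide
  | succ k ih =>
    have hsing : (List.range ((8 + k) + 1)).filter
        (fun j => decide (j ∉ ([1, 3, 5, 7] : List ℕ)))
        = (List.range (8 + k)).filter (fun j => decide (j ∉ ([1, 3, 5, 7] : List ℕ))) ++ [8 + k] := by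
      rw [List.range_succ, List.filter_append]
      congr 1
      refine List.filter_eq_self.mpr ?_
      intro a ha
      simp only [List.mem_singleton] at ha
      subst ha
      simp only [decide_eq_true_eq, List.mem_cons, List.not_mem_nil, or_false]
      omega
    rw [show 8 + (k + 1) = (8 + k) + 1 from rfl, hsing, List.length_append, ih]
    simp only [List.length_singleton]
    omega

end PartitionAux

open PartitionAux

/-- Partition case `λ₁ = λ₂ = 2` in Lemma 5.8: with
`w = e₁∧e₄ + e₂∧e₃ + e₅∧e₈ + e₆∧e₇ + Σ_{j≥5} e_{2j−1}∧e_{2j}`,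
`v = a₁(e₁∧e₄ + e₂∧e₃) + a₂(e₅∧e₈ + e₆∧e₇) + e₂∧e₄ + e₆∧e₈ + Σ_{j≥5} bⱼ e_{2j−1}∧e_{2j}` and
`φ = ⋀_{j∉{2,4,6,8}} eⱼ`, one has `φ ∧ w = 0` but `φ ∧ v ∧ v ≠ 0`; in particular `w` does not
divide `v ∧ v`. -/
theorem partition_two_two_not_divisible
    (n : ℕ) (hn : 4 ≤ n) (a₁ a₂ : ℂ) (b : ℕ → ℂ) :
    letI E := stdExt (2 * n)
    letI w := E 0 * E 3 + E 1 * E 2 + E 4 * E 7 + E 5 * E 6 +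
      ∑ j ∈ Finset.Ico 4 n, E (2 * j) * E (2 * j + 1)
    letI v := a₁ • (E 0 * E 3 + E 1 * E 2) + a₂ • (E 4 * E 7 + E 5 * E 6) +
      E 1 * E 3 + E 5 * E 7 + ∑ j ∈ Finset.Ico 4 n, b j • (E (2 * j) * E (2 * j + 1))
    letI φ := (((List.range (2 * n)).filter
      (fun j => decide (j ∉ ([1, 3, 5, 7] : List ℕ)))).map E).prod
    φ * w = 0 ∧ φ * (v * v) ≠ 0 ∧
      ¬∃ u : ExteriorAlgebra ℂ (Fin (2 * n) → ℂ), v * v = w * u := by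
  set m := 2 * n with hm
  set E := stdExt m with hE
  set L : List ℕ := (List.range m).filter
      (fun j => decide (j ∉ ([1, 3, 5, 7] : List ℕ))) with hLdef
  have hφ : ((L.map E).prod : ExteriorAlgebra ℂ (Fin m → ℂ)) = WL m L := rfl
  have hmemL : ∀ x, x ∈ L ↔ (x < m ∧ ¬(x = 1 ∨ x = 3 ∨ x = 5 ∨ x = 7)) := by
    intro x
    simp [hLdef, List.mem_filter, List.mem_range]
  have h0 : 0 ∈ L := by rw [hmemL]; omega
  have h2 : 2 ∈ L := by rw [hmemL]; omega
  have h4 : 4 ∈ L := by rw [hmemL]; omega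
  have h6 : 6 ∈ L := by rw [hmemL]; omega
  have hS : ∀ j ∈ Finset.Ico 4 n, 2 * j ∈ L := by
    intro j hj
    rw [Finset.mem_Ico] at hj
    rw [hmemL]
    omega
  -- generic annihilation of `v` up to the two surviving terms
  have mulv : ∀ l : List ℕ, 0 ∈ l → (1 ∈ l ∨ 2 ∈ l) → 4 ∈ l → (5 ∈ l ∨ 6 ∈ l) →
      (∀ j ∈ Finset.Ico 4 n, 2 * j ∈ l) →
      WL m l * (a₁ • (E 0 * E 3 + E 1 * E 2) + a₂ • (E 4 * E 7 + E 5 * E 6) +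
        E 1 * E 3 + E 5 * E 7 + ∑ j ∈ Finset.Ico 4 n, b j • (E (2 * j) * E (2 * j + 1)))
        = WL m l * (E 1 * E 3) + WL m l * (E 5 * E 7) := by
    intro l hl0 hl12 hl4 hl56 hlS
    rw [mul_add, mul_add, mul_add, mul_add, mul_smul_comm, mul_smul_comm, mul_add, mul_add,
      kill2 m l 0 3 (Or.inl hl0), kill2 m l 1 2 hl12, kill2 m l 4 7 (Or.inl hl4),
      kill2 m l 5 6 hl56, Finset.mul_sum,
      Finset.sum_eq_zero (fun j hj => by
        rw [mul_smul_comm, kill2 m l (2*j) (2*j+1) (Or.inl (hlS j hj)), smul_zero])]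
    simp
  -- first conjunct
  have hw : WL m L * (E 0 * E 3 + E 1 * E 2 + E 4 * E 7 + E 5 * E 6 +
      ∑ j ∈ Finset.Ico 4 n, E (2 * j) * E (2 * j + 1)) = 0 := by
    rw [mul_add, mul_add, mul_add, mul_add,
      kill2 m L 0 3 (Or.inl h0), kill2 m L 1 2 (Or.inr h2), kill2 m L 4 7 (Or.inl h4),
      kill2 m L 5 6 (Or.inr h6), Finset.mul_sum,
      Finset.sum_eq_zero (fun j hj => kill2 m L (2*j) (2*j+1) (Or.inl (hS j hj)))]
    simp
  -- the nonzero element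
  set M : List ℕ := L ++ [1, 3, 5, 7] with hMdef
  have hlenL : L.length = 4 + (2 * n - 8) := by
    have h := filter_len (2 * n - 8)
    rw [show 8 + (2 * n - 8) = 2 * n by omega] at h
    exact h
  have hlenM : M.length = m := by
    rw [hMdef, List.length_append, hlenL]
    simp only [List.length_cons, List.length_nil]
    omega
  have hnodM : M.Nodup := by
    refine List.Nodup.append ?_ (by decide) ?_
    · exact List.nodup_range.filter _
    · intro x hxL hx2
      have := (hmemL x).mp hxL
      simp only [List.mem_cons, List.not_mem_nil, or_false] at hx2
      tauto
  have hmemM : ∀ x ∈ M, x < M.length := by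
    intro x hx
    rw [hlenM]
    rcases List.mem_append.mp hx with h | h
    · exact ((hmemL x).mp h).1
    · simp only [List.mem_cons, List.not_mem_nil, or_false] at h
      omega
  have hMne : WL m M ≠ 0 := by
    have h := WL_ne_zero M hnodM hmemM
    rwa [hlenM] at h
  -- second conjunct
  have hv2 : WL m L * ((a₁ • (E 0 * E 3 + E 1 * E 2) + a₂ • (E 4 * E 7 + E 5 * E 6) +
      E 1 * E 3 + E 5 * E 7 + ∑ j ∈ Finset.Ico 4 n, b j • (E (2 * j) * E (2 * j + 1))) *
      (a₁ • (E 0 * E 3 + E 1 * E 2) + a₂ • (E 4 * E 7 + E 5 * E 6) +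
      E 1 * E 3 + E 5 * E 7 + ∑ j ∈ Finset.Ico 4 n, b j • (E (2 * j) * E (2 * j + 1))))
      = WL m M + WL m M := by
    rw [← mul_assoc, mulv L h0 (Or.inr h2) h4 (Or.inr h6) hS, add_mul]
    have e13 : WL m L * (E 1 * E 3) = WL m (L ++ [1, 3]) := by
      rw [WL_append, WL_pair]
    have e57 : WL m L * (E 5 * E 7) = WL m (L ++ [5, 7]) := by
      rw [WL_append, WL_pair]
    have mem13 : ∀ x, x ∈ L → x ∈ L ++ [1, 3] := fun x hx => List.mem_append_left _ hx
    have mem57 : ∀ x, x ∈ L → x ∈ L ++ [5, 7] := fun x hx => List.mem_append_left _ hx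
    rw [e13, e57,
      mulv (L ++ [1, 3]) (mem13 _ h0) (Or.inl (by simp)) (mem13 _ h4) (Or.inr (mem13 _ h6))
        (fun j hj => mem13 _ (hS j hj)),
      mulv (L ++ [5, 7]) (mem57 _ h0) (Or.inr (mem57 _ h2)) (mem57 _ h4) (Or.inl (by simp))
        (fun j hj => mem57 _ (hS j hj)),
      kill2 m (L ++ [1, 3]) 1 3 (Or.inl (by simp)), zero_add,
      kill2 m (L ++ [5, 7]) 5 7 (Or.inl (by simp)), add_zero]
    have step4 : WL m (L ++ [1, 3]) * (E 5 * E 7) = WL m M := by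
      rw [← WL_pair m 5 7, ← WL_append, List.append_assoc]
      rfl
    have step5 : WL m (L ++ [5, 7]) * (E 1 * E 3) = WL m M := by
      rw [WL_append, WL_pair, mul_assoc, pair_comm m 5 7 1 3, ← mul_assoc, ← WL_pair m 1 3,
        ← WL_append, ← WL_pair m 5 7, ← WL_append, List.append_assoc]
      rfl
    rw [step4, step5]
  refine ⟨hw, ?_, ?_⟩
  · rw [hφ, hv2]
    intro h
    apply hMne
    have h2' : (2 : ℂ) • WL m M = 0 := by rw [two_smul]; exact h
    rcases smul_eq_zero.mp h2' with h' | h'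
    · exact absurd h' two_ne_zero
    · exact h'
  · rintro ⟨u, hu⟩
    have : WL m L * ((a₁ • (E 0 * E 3 + E 1 * E 2) + a₂ • (E 4 * E 7 + E 5 * E 6) +
        E 1 * E 3 + E 5 * E 7 + ∑ j ∈ Finset.Ico 4 n, b j • (E (2 * j) * E (2 * j + 1))) *
        (a₁ • (E 0 * E 3 + E 1 * E 2) + a₂ • (E 4 * E 7 + E 5 * E 6) +
        E 1 * E 3 + E 5 * E 7 + ∑ j ∈ Finset.Ico 4 n, b j • (E (2 * j) * E (2 * j + 1)))) = 0 := by
      rw [hu, ← mul_assoc, hw, zero_mul]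
    rw [hv2] at this
    apply hMne
    have h2' : (2 : ℂ) • WL m M = 0 := by rw [two_smul]; exact this
    rcases smul_eq_zero.mp h2' with h' | h'
    · exact absurd h' two_ne_zero
    · exact h'
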